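/- For any two finite graphs G and H, the routing number of the Cartesian product satisfies rt(G □ H) ≤ 2·rt(G) + rt(H). -/

import Mathlib

/-- A routing step in a graph: an involution of the vertices each of whose
non-fixed points is swapped with a neighbour (a matching). -/
def IsRoutingStep {V : Type*} (G : SimpleGraph V) (m : Equiv.Perm V) : Prop :=
  (∀ v, m (m v) = v) ∧ ∀ v, m v = v ∨ G.Adj v (m v)

/-- Every permutation of the vertices of `G` can be realised by `k` rounds of
swaps along matchings. -/
def RoutableIn {V : Type*} (G : SimpleGraph V) (k : ℕ) : Prop :=
  ∀ τ : Equiv.Perm V, ∃ ms : Fin k → Equiv.Perm V,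
    (∀ i, IsRoutingStep G (ms i)) ∧
    ∀ v, τ v = (List.ofFn fun i => ⇑(ms i)).foldl (fun g h => h ∘ g) id v

/-- The routing number of a graph. -/
noncomputable def routingNumber {V : Type*} (G : SimpleGraph V) : ℕ :=
  sInf {k | RoutableIn G k}


section Routes
variable {V : Type*} {G : SimpleGraph V}

lemma foldl_comp_apply {α : Type*} (l : List (α → α)) (F : α → α) (x : α) :
    (l.foldl (fun g h => h ∘ g) F) x = l.foldl (fun y h => h y) (F x) := by
  induction l generalizing F with
  | nil => rfl
  | cons a l ih => simp [List.foldl_cons, ih]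

/-- A list of matchings routing `τ`. -/
def RoutesL (G : SimpleGraph V) (l : List (Equiv.Perm V)) (τ : Equiv.Perm V) : Prop :=
  (∀ m ∈ l, IsRoutingStep G m) ∧ ∀ v, τ v = l.foldl (fun y m => m y) v

lemma routesL_nil : RoutesL G [] 1 := ⟨by simp, fun v => rfl⟩

lemma routesL_append {l₁ l₂ : List (Equiv.Perm V)} {τ₁ τ₂ : Equiv.Perm V}
    (h₁ : RoutesL G l₁ τ₁) (h₂ : RoutesL G l₂ τ₂) : RoutesL G (l₁ ++ l₂) (τ₂ * τ₁) := by
  refine ⟨fun m hm => ?_, fun v => ?_⟩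
  · rcases List.mem_append.1 hm with h | h
    · exact h₁.1 m h
    · exact h₂.1 m h
  · rw [List.foldl_append, ← h₁.2 v, ← h₂.2 (τ₁ v)]; rfl

lemma isRoutingStep_one : IsRoutingStep G 1 := ⟨fun v => rfl, fun v => Or.inl rfl⟩

lemma routesL_replicate (d : ℕ) : RoutesL G (List.replicate d 1) 1 := by
  refine ⟨fun m hm => ?_, fun v => ?_⟩
  · rw [List.eq_of_mem_replicate hm]; exact isRoutingStep_one
  · induction d with
    | zero => rfl
    | succ d ih => simpa [List.replicate_succ] using ih

lemma routesL_pad {l : List (Equiv.Perm V)} {τ : Equiv.Perm V} (h : RoutesL G l τ) (d : ℕ) :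
    RoutesL G (l ++ List.replicate d 1) τ := by
  simpa using routesL_append h (routesL_replicate d)

lemma ofFn_get_map {α β : Type*} {k : ℕ} {l : List α} (h : l.length = k) (f : α → β) :
    (List.ofFn fun i : Fin k => f (l.get (Fin.cast h.symm i))) = l.map f := by
  apply List.ext_getElem <;> simp [h]

lemma routableIn_of_routesL {k : ℕ}
    (h : ∀ τ : Equiv.Perm V, ∃ l, RoutesL G l τ ∧ l.length = k) : RoutableIn G k := by
  intro τ
  obtain ⟨l, hl, hlen⟩ := h τ
  refine ⟨fun i => l.get (Fin.cast hlen.symm i), fun i => hl.1 _ (l.get_mem _), fun v => ?_⟩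
  rw [ofFn_get_map hlen (fun m : Equiv.Perm V => (⇑m : V → V)), foldl_comp_apply,
    List.foldl_map]
  exact hl.2 v

lemma exists_routesL_of_routableIn {k : ℕ} (h : RoutableIn G k) (τ : Equiv.Perm V) :
    ∃ l, RoutesL G l τ ∧ l.length = k := by
  obtain ⟨ms, h1, h2⟩ := h τ
  refine ⟨List.ofFn ms, ⟨fun m hm => ?_, fun v => ?_⟩, by simp⟩
  · obtain ⟨i, rfl⟩ := List.mem_ofFn.1 hm; exact h1 i
  · rw [h2 v, foldl_comp_apply]
    have : (List.ofFn fun i => ⇑(ms i)) = (List.ofFn ms).map (fun m : Equiv.Perm V => (⇑m : V → V)) :=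
      (List.map_ofFn (f := ms) (g := fun m : Equiv.Perm V => (⇑m : V → V))).symm
    rw [this, List.foldl_map]
    rfl

end Routes

section Conn
variable {V : Type*} {G : SimpleGraph V}

lemma reachable_foldl {l : List (Equiv.Perm V)} (hl : ∀ m ∈ l, IsRoutingStep G m) (v : V) :
    G.Reachable v (l.foldl (fun y m => m y) v) := by
  induction l generalizing v with
  | nil => exact SimpleGraph.Reachable.refl v
  | cons m l ih =>
    have h1 : G.Reachable v (m v) := by
      rcases (hl m List.mem_cons_self).2 v with h | h
      · rw [h]
      · exact h.reachable
    exact h1.trans (ih (fun m hm => hl m (List.mem_cons_of_mem _ hm)) (m v))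

lemma preconnected_of_routableIn {k : ℕ} (h : RoutableIn G k) : G.Preconnected := by
  classical
  intro u v
  obtain ⟨l, hl, -⟩ := exists_routesL_of_routableIn h (Equiv.swap u v)
  have := reachable_foldl hl.1 u
  rw [← hl.2 u, Equiv.swap_apply_left] at this
  exact this

lemma isRoutingStep_swap [DecidableEq V] {u v : V} (h : G.Adj u v) :
    IsRoutingStep G (Equiv.swap u v) := by
  refine ⟨fun x => Equiv.swap_apply_self _ _ _, fun x => ?_⟩
  rcases eq_or_ne x u with rfl | hu
  · exact Or.inr (by rwa [Equiv.swap_apply_left])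
  rcases eq_or_ne x v with rfl | hv
  · exact Or.inr (by rwa [Equiv.swap_apply_right, ← SimpleGraph.adj_comm])
  · exact Or.inl (Equiv.swap_apply_of_ne_of_ne hu hv)

lemma exists_routesL_swap [DecidableEq V] {u v : V} (h : G.Reachable u v) :
    ∃ l, RoutesL G l (Equiv.swap u v) := by
  obtain ⟨p⟩ := h
  induction p with
  | nil => exact ⟨[], by simpa [Equiv.swap_self, Equiv.Perm.one_def] using routesL_nil (G := G)⟩
  | @cons a b c h p ih =>
    rcases eq_or_ne a c with rfl | hac
    · exact ⟨[], by simpa [Equiv.swap_self, Equiv.Perm.one_def] using routesL_nil (G := G)⟩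
    rcases eq_or_ne b c with rfl | hbc
    · exact ⟨[Equiv.swap a b], by simpa using isRoutingStep_swap h, fun y => by simp⟩
    · obtain ⟨l, hl⟩ := ih
      have hstep : RoutesL G [Equiv.swap a b] (Equiv.swap a b) :=
        ⟨by simpa using isRoutingStep_swap h, fun y => by simp⟩
      have hR : RoutesL G ([Equiv.swap a b] ++ l ++ [Equiv.swap a b])
          (Equiv.swap a b * (Equiv.swap b c * Equiv.swap a b)) :=
        routesL_append (routesL_append hstep hl) hstep
      have heq : Equiv.swap a b * (Equiv.swap b c * Equiv.swap a b) = Equiv.swap a c := by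
        rw [← mul_assoc, Equiv.swap_comm a b, Equiv.swap_comm b c,
          Equiv.swap_mul_swap_mul_swap hbc.symm (Ne.symm hac), Equiv.swap_comm]
      exact ⟨_, heq ▸ hR⟩

lemma exists_routesL_of_preconnected [DecidableEq V] [Finite V] (hG : G.Preconnected)
    (τ : Equiv.Perm V) : ∃ l, RoutesL G l τ := by
  refine Equiv.Perm.swap_induction_on τ ⟨[], routesL_nil⟩ fun f x y hxy ih => ?_
  obtain ⟨l, hl⟩ := ih
  obtain ⟨l', hl'⟩ := exists_routesL_swap (hG x y)
  exact ⟨l ++ l', routesL_append hl hl'⟩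

lemma exists_routableIn [DecidableEq V] [Fintype V] (hG : G.Preconnected) :
    ∃ k, RoutableIn G k := by
  have h := fun τ : Equiv.Perm V => exists_routesL_of_preconnected hG τ
  choose L hL using h
  refine ⟨Finset.univ.sup fun τ => (L τ).length, routableIn_of_routesL fun τ => ?_⟩
  refine ⟨L τ ++ List.replicate (Finset.univ.sup (fun τ => (L τ).length) - (L τ).length) 1,
    routesL_pad (hL τ) _, ?_⟩
  have : (L τ).length ≤ Finset.univ.sup fun τ => (L τ).length :=
    Finset.le_sup (f := fun τ => (L τ).length) (Finset.mem_univ τ)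
  simp; omega

end Conn

section Comb
variable {V W : Type*} [Fintype V] [Fintype W] [DecidableEq V] [DecidableEq W]

lemma card_filter_col_biUnion (S : Finset (V × W)) (g : V × W → W) (n : ℕ)
    (hc : ∀ w, (S.filter fun p => g p = w).card = n) (T : Finset W) :
    (S.filter fun p => g p ∈ T).card = n * T.card := by
  have : S.filter (fun p => g p ∈ T) = T.biUnion fun w => S.filter fun p => g p = w := by
    ext p
    simp only [Finset.mem_filter, Finset.mem_biUnion]
    constructor
    · rintro ⟨hp, hT⟩; exact ⟨g p, hT, hp, rfl⟩
    · rintro ⟨w, hw, hp, rfl⟩; exact ⟨hp, hw⟩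
  rw [this, Finset.card_biUnion, Finset.sum_congr rfl fun w _ => hc w, Finset.sum_const,
    smul_eq_mul, mul_comm]
  intro x _ y _ hxy
  simp only [Finset.disjoint_left, Finset.mem_filter]
  rintro p ⟨-, rfl⟩ ⟨-, h⟩
  exact hxy h

lemma exists_matching (t : V × W → W) (n : ℕ) (hn : n ≠ 0) (S : Finset (V × W))
    (hcol : ∀ w, (S.filter fun p => p.2 = w).card = n)
    (htgt : ∀ w, (S.filter fun p => t p = w).card = n) :
    ∃ M : Finset (V × W), M ⊆ S ∧ (∀ w, (M.filter fun p => p.2 = w).card = 1) ∧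
      (∀ w, (M.filter fun p => t p = w).card = 1) := by
  set A : W → Finset W := fun w => (S.filter fun p => p.2 = w).image t with hA
  have hall : ∀ T : Finset W, T.card ≤ (T.biUnion A).card := by
    intro T
    have hsub : (S.filter fun p => p.2 ∈ T) ⊆ S.filter fun p => t p ∈ T.biUnion A := by
      intro p hp
      rw [Finset.mem_filter] at hp ⊢
      refine ⟨hp.1, Finset.mem_biUnion.2 ⟨p.2, hp.2, ?_⟩⟩
      exact Finset.mem_image.2 ⟨p, Finset.mem_filter.2 ⟨hp.1, rfl⟩, rfl⟩
    have h1 := card_filter_col_biUnion S (fun p => p.2) n hcol T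
    have h2 := card_filter_col_biUnion S t n htgt (T.biUnion A)
    have := Finset.card_le_card hsub
    rw [h1, h2] at this
    exact Nat.le_of_mul_le_mul_left this (Nat.pos_of_ne_zero hn)
  obtain ⟨m, hminj, hmA⟩ := (Finset.all_card_le_biUnion_card_iff_exists_injective A).1 hall
  have hmbij : Function.Bijective m := Finite.injective_iff_bijective.1 hminj
  have hpick : ∀ w : W, ∃ p, p ∈ S ∧ p.2 = w ∧ t p = m w := by
    intro w
    obtain ⟨p, hp, hpt⟩ := Finset.mem_image.1 (hmA w)
    rw [Finset.mem_filter] at hp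
    exact ⟨p, hp.1, hp.2, hpt⟩
  choose pk hpkS hpk2 hpkt using hpick
  refine ⟨Finset.univ.image pk, ?_, ?_, ?_⟩
  · intro p hp
    obtain ⟨w, -, rfl⟩ := Finset.mem_image.1 hp
    exact hpkS w
  · intro w
    have : (Finset.univ.image pk).filter (fun p => p.2 = w) = {pk w} := by
      ext q
      simp only [Finset.mem_filter, Finset.mem_image, Finset.mem_singleton]
      constructor
      · rintro ⟨⟨w', -, rfl⟩, h2⟩; rw [hpk2 w'] at h2; rw [h2]
      · rintro rfl; exact ⟨⟨w, Finset.mem_univ w, rfl⟩, hpk2 w⟩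
    rw [this, Finset.card_singleton]
  · intro w
    obtain ⟨w0, hw0⟩ := hmbij.2 w
    have : (Finset.univ.image pk).filter (fun p => t p = w) = {pk w0} := by
      ext q
      simp only [Finset.mem_filter, Finset.mem_image, Finset.mem_singleton]
      constructor
      · rintro ⟨⟨w', -, rfl⟩, h2⟩
        rw [hpkt w'] at h2
        rw [hminj (h2.trans hw0.symm)]
      · rintro rfl; exact ⟨⟨w0, Finset.mem_univ w0, rfl⟩, (hpkt w0).trans hw0⟩
    rw [this, Finset.card_singleton]

lemma exists_coloring (t : V × W → W) :
    ∀ (n : ℕ) (S : Finset (V × W)),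
    (∀ w, (S.filter fun p => p.2 = w).card = n) →
    (∀ w, (S.filter fun p => t p = w).card = n) →
    ∃ f : V × W → ℕ, (∀ p ∈ S, f p < n) ∧
      (∀ p ∈ S, ∀ q ∈ S, f p = f q → p.2 = q.2 → p = q) ∧
      (∀ p ∈ S, ∀ q ∈ S, f p = f q → t p = t q → p = q) := by
  intro n
  induction n with
  | zero =>
    intro S hcol _
    have hS : ∀ p : V × W, p ∉ S := by
      intro p hp
      have := hcol p.2
      rw [Finset.card_eq_zero] at this
      have hmem : p ∈ Finset.filter (fun q => q.2 = p.2) S := Finset.mem_filter.2 ⟨hp, rfl⟩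
      rw [this] at hmem
      exact absurd hmem (Finset.notMem_empty p)
    exact ⟨fun _ => 0, fun p hp => absurd hp (hS p), fun p hp => absurd hp (hS p),
      fun p hp => absurd hp (hS p)⟩
  | succ n ih =>
    intro S hcol htgt
    obtain ⟨M, hMS, hMcol, hMtgt⟩ := exists_matching t (n + 1) (Nat.succ_ne_zero n) S hcol htgt
    have hfilter : ∀ (g : V × W → W) (hc : ∀ w, (S.filter fun p => g p = w).card = n + 1)
        (hm : ∀ w, (M.filter fun p => g p = w).card = 1) (w : W),
        ((S \ M).filter fun p => g p = w).card = n := by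
      intro g hc hm w
      have hsd : (S \ M).filter (fun p => g p = w) =
          S.filter (fun p => g p = w) \ M.filter (fun p => g p = w) := by
        ext p
        simp only [Finset.mem_filter, Finset.mem_sdiff]
        tauto
      rw [hsd, Finset.card_sdiff_of_subset (Finset.filter_subset_filter _ hMS), hc, hm]
      omega
    obtain ⟨f, hfb, hf1, hf2⟩ := ih (S \ M)
      (hfilter (fun p => p.2) hcol hMcol) (hfilter t htgt hMtgt)
    refine ⟨fun p => if p ∈ M then n else f p, ?_, ?_, ?_⟩
    · intro p hp
      show (if p ∈ M then n else f p) < n + 1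
      by_cases hpM : p ∈ M
      · rw [if_pos hpM]; exact Nat.lt_succ_self n
      · rw [if_neg hpM]
        exact Nat.lt_succ_of_lt (hfb p (Finset.mem_sdiff.2 ⟨hp, hpM⟩))
    · intro p hp q hq hfeq h2
      have hfeq' : (if p ∈ M then n else f p) = (if q ∈ M then n else f q) := hfeq
      by_cases hpM : p ∈ M <;> by_cases hqM : q ∈ M
      · exact Finset.card_le_one.1 (le_of_eq (hMcol p.2)) p
          (Finset.mem_filter.2 ⟨hpM, rfl⟩) q (Finset.mem_filter.2 ⟨hqM, h2.symm⟩)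
      · rw [if_pos hpM, if_neg hqM] at hfeq'
        exact absurd hfeq'.symm (Nat.ne_of_lt (hfb q (Finset.mem_sdiff.2 ⟨hq, hqM⟩)))
      · rw [if_neg hpM, if_pos hqM] at hfeq'
        exact absurd hfeq' (Nat.ne_of_lt (hfb p (Finset.mem_sdiff.2 ⟨hp, hpM⟩)))
      · rw [if_neg hpM, if_neg hqM] at hfeq'
        exact hf1 p (Finset.mem_sdiff.2 ⟨hp, hpM⟩) q (Finset.mem_sdiff.2 ⟨hq, hqM⟩) hfeq' h2
    · intro p hp q hq hfeq h2
      have hfeq' : (if p ∈ M then n else f p) = (if q ∈ M then n else f q) := hfeq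
      by_cases hpM : p ∈ M <;> by_cases hqM : q ∈ M
      · exact Finset.card_le_one.1 (le_of_eq (hMtgt (t p))) p
          (Finset.mem_filter.2 ⟨hpM, rfl⟩) q (Finset.mem_filter.2 ⟨hqM, h2.symm⟩)
      · rw [if_pos hpM, if_neg hqM] at hfeq'
        exact absurd hfeq'.symm (Nat.ne_of_lt (hfb q (Finset.mem_sdiff.2 ⟨hq, hqM⟩)))
      · rw [if_neg hpM, if_pos hqM] at hfeq'
        exact absurd hfeq' (Nat.ne_of_lt (hfb p (Finset.mem_sdiff.2 ⟨hp, hpM⟩)))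
      · rw [if_neg hpM, if_neg hqM] at hfeq'
        exact hf2 p (Finset.mem_sdiff.2 ⟨hp, hpM⟩) q (Finset.mem_sdiff.2 ⟨hq, hqM⟩) hfeq' h2

end Comb

section Lift
variable {V W : Type*} [Fintype V] [Fintype W]

lemma foldl_ofFn_coe {α : Type*} : ∀ {k : ℕ} (ms : Fin k → Equiv.Perm α) (x : α),
    (List.ofFn fun i => (⇑(ms i) : α → α)).foldl (fun y h => h y) x =
      (List.ofFn ms).foldl (fun y m => m y) x := by
  intro k
  induction k with
  | zero => intro ms x; simp
  | succ k ih =>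
    intro ms x
    rw [List.ofFn_succ, List.ofFn_succ, List.foldl_cons, List.foldl_cons]
    exact ih (fun i => ms i.succ) (ms 0 x)

lemma card_filter_snd [DecidableEq W] (w : W) :
    ((Finset.univ : Finset (V × W)).filter fun p => p.2 = w).card = Fintype.card V := by
  classical
  have : ((Finset.univ : Finset (V × W)).filter fun p => p.2 = w) =
      Finset.univ.image fun v : V => (v, w) := by
    ext p
    simp only [Finset.mem_filter, Finset.mem_univ, true_and, Finset.mem_image]
    constructor
    · intro h; exact ⟨p.1, by rw [← h]⟩
    · rintro ⟨v, rfl⟩; rfl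
  rw [this, Finset.card_image_of_injective _ (fun a b hab => (Prod.mk.injEq _ _ _ _ ▸ hab).1),
    Finset.card_univ]

lemma card_filter_tgt [DecidableEq W] (τ : Equiv.Perm (V × W)) (w : W) :
    ((Finset.univ : Finset (V × W)).filter fun p => (τ p).2 = w).card = Fintype.card V := by
  rw [← card_filter_snd (V := V) w]
  apply Finset.card_bij (fun p _ => τ p)
  · intro p hp
    rw [Finset.mem_filter] at hp ⊢
    exact ⟨Finset.mem_univ _, hp.2⟩
  · intro p _ q _ h
    exact τ.injective h
  · intro q hq
    rw [Finset.mem_filter] at hq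
    exact ⟨τ.symm q, Finset.mem_filter.2 ⟨Finset.mem_univ _, by simp [hq.2]⟩,
      τ.apply_symm_apply q⟩

lemma exists_f [Nonempty V] (τ : Equiv.Perm (V × W)) :
    ∃ f : V × W → V, Function.Injective (fun p => (f p, p.2)) ∧
      Function.Injective (fun p => (f p, (τ p).2)) := by
  classical
  obtain ⟨f₀, hb, h1, h2⟩ := exists_coloring (fun p => (τ p).2) (Fintype.card V)
    Finset.univ card_filter_snd (card_filter_tgt τ)
  set e := (Fintype.equivFin V).symm
  refine ⟨fun p => e ⟨f₀ p, hb p (Finset.mem_univ p)⟩, ?_, ?_⟩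
  · intro p q h
    rw [Prod.mk.injEq] at h
    have := e.injective h.1
    rw [Fin.mk.injEq] at this
    exact h1 p (Finset.mem_univ p) q (Finset.mem_univ q) this h.2
  · intro p q h
    rw [Prod.mk.injEq] at h
    have := e.injective h.1
    rw [Fin.mk.injEq] at this
    exact h2 p (Finset.mem_univ p) q (Finset.mem_univ q) this h.2

variable {G : SimpleGraph V} {H : SimpleGraph W}

lemma fold_ofFn_fiber {α β : Type*} {k : ℕ} (F : Fin k → α × β → α × β) (g : Fin k → α → α)
    (w : β) (h : ∀ i v, F i (v, w) = (g i v, w)) (v : α) :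
    (List.ofFn F).foldl (fun p m => m p) (v, w) =
      ((List.ofFn g).foldl (fun x m => m x) v, w) := by
  induction k generalizing v with
  | zero => simp
  | succ k ih =>
    rw [List.ofFn_succ, List.ofFn_succ, List.foldl_cons, List.foldl_cons, h 0 v]
    exact ih (fun i => F i.succ) (fun i => g i.succ) (fun i v => h i.succ v) (g 0 v)

/-- Lift a `G`-routing within each column to the box product. -/
lemma routesL_boxProd_left {a : ℕ} (ha : RoutableIn G a) (π : Equiv.Perm (V × W))
    (hπ : ∀ p, (π p).2 = p.2) :
    ∃ l, RoutesL (G.boxProd H) l π ∧ l.length = a := by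
  have hπ' : ∀ p : V × W, (π.symm p).2 = p.2 := by
    intro p
    conv_rhs => rw [← π.apply_symm_apply p]
    exact (hπ (π.symm p)).symm
  have hσ : ∀ w : W, ∃ σ : Equiv.Perm V, ∀ v, σ v = (π (v, w)).1 := by
    intro w
    refine ⟨⟨fun v => (π (v, w)).1, fun v => (π.symm (v, w)).1, fun v => ?_, fun v => ?_⟩,
      fun v => rfl⟩
    · show (π.symm ((π (v, w)).1, w)).1 = v
      have h1 : ((π (v, w)).1, w) = π (v, w) := Prod.ext_iff.2 ⟨rfl, (hπ (v, w)).symm⟩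
      rw [h1, π.symm_apply_apply]
    · show (π ((π.symm (v, w)).1, w)).1 = v
      have h1 : ((π.symm (v, w)).1, w) = π.symm (v, w) := Prod.ext_iff.2 ⟨rfl, (hπ' (v, w)).symm⟩
      rw [h1, π.apply_symm_apply]
  choose σ hσ using hσ
  have hms := fun w => ha (σ w)
  choose ms hms1 hms2 using hms
  have hMs : ∀ i : Fin a, ∃ M : Equiv.Perm (V × W), ∀ p : V × W, M p = (ms p.2 i p.1, p.2) := by
    intro i
    refine ⟨⟨fun p => (ms p.2 i p.1, p.2), fun p => ((ms p.2 i)⁻¹ p.1, p.2), fun p => ?_,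
      fun p => ?_⟩, fun p => rfl⟩ <;> simp
  choose M hM using hMs
  refine ⟨List.ofFn M, ⟨?_, ?_⟩, by simp⟩
  · intro m hm
    obtain ⟨i, rfl⟩ := List.mem_ofFn.1 hm
    constructor
    · intro p
      rw [hM i p, hM i ((ms p.2 i) p.1, p.2)]
      exact Prod.ext_iff.2 ⟨(hms1 p.2 i).1 p.1, rfl⟩
    · intro p
      rcases (hms1 p.2 i).2 p.1 with h | h
      · left
        rw [hM i p, h]
      · right
        rw [hM i p, SimpleGraph.boxProd_adj]
        exact Or.inl ⟨by simpa using h, rfl⟩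
  · rintro ⟨v, w⟩
    have hfold := fold_ofFn_fiber (fun i => (⇑(M i) : V × W → V × W)) (fun i => ⇑(ms w i)) w
      (fun i v => hM i (v, w)) v
    have hπv : π (v, w) = (σ w v, w) := by
      rw [hσ w v]
      exact (Prod.ext_iff.2 ⟨rfl, (hπ (v, w)).symm⟩ :
        ((π (v, w)).1, w) = π (v, w)).symm
    rw [← foldl_ofFn_coe M (v, w), hfold, hπv, hms2 w v, foldl_comp_apply]
    rfl

end Lift

section Lift2
variable {V W : Type*} [Fintype V] [Fintype W] {G : SimpleGraph V} {H : SimpleGraph W}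

lemma fold_ofFn_fiber2 {α β : Type*} {k : ℕ} (F : Fin k → α × β → α × β) (g : Fin k → β → β)
    (v : α) (h : ∀ i w, F i (v, w) = (v, g i w)) (w : β) :
    (List.ofFn F).foldl (fun p m => m p) (v, w) =
      (v, (List.ofFn g).foldl (fun x m => m x) w) := by
  induction k generalizing w with
  | zero => simp
  | succ k ih =>
    rw [List.ofFn_succ, List.ofFn_succ, List.foldl_cons, List.foldl_cons, h 0 w]
    exact ih (fun i => F i.succ) (fun i => g i.succ) (fun i w => h i.succ w) (g 0 w)

/-- Lift an `H`-routing within each row to the box product. -/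
lemma routesL_boxProd_right {b : ℕ} (hb : RoutableIn H b) (π : Equiv.Perm (V × W))
    (hπ : ∀ p, (π p).1 = p.1) :
    ∃ l, RoutesL (G.boxProd H) l π ∧ l.length = b := by
  have hπ' : ∀ p : V × W, (π.symm p).1 = p.1 := by
    intro p
    conv_rhs => rw [← π.apply_symm_apply p]
    exact (hπ (π.symm p)).symm
  have hσ : ∀ v : V, ∃ σ : Equiv.Perm W, ∀ w, σ w = (π (v, w)).2 := by
    intro v
    refine ⟨⟨fun w => (π (v, w)).2, fun w => (π.symm (v, w)).2, fun w => ?_, fun w => ?_⟩,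
      fun w => rfl⟩
    · show (π.symm (v, (π (v, w)).2)).2 = w
      have h1 : (v, (π (v, w)).2) = π (v, w) := Prod.ext_iff.2 ⟨(hπ (v, w)).symm, rfl⟩
      rw [h1, π.symm_apply_apply]
    · show (π (v, (π.symm (v, w)).2)).2 = w
      have h1 : (v, (π.symm (v, w)).2) = π.symm (v, w) := Prod.ext_iff.2 ⟨(hπ' (v, w)).symm, rfl⟩
      rw [h1, π.apply_symm_apply]
  choose σ hσ using hσ
  have hms := fun v => hb (σ v)
  choose ms hms1 hms2 using hms
  have hMs : ∀ i : Fin b, ∃ M : Equiv.Perm (V × W), ∀ p : V × W, M p = (p.1, ms p.1 i p.2) := by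
    intro i
    refine ⟨⟨fun p => (p.1, ms p.1 i p.2), fun p => (p.1, (ms p.1 i)⁻¹ p.2), fun p => ?_,
      fun p => ?_⟩, fun p => rfl⟩ <;> simp
  choose M hM using hMs
  refine ⟨List.ofFn M, ⟨?_, ?_⟩, by simp⟩
  · intro m hm
    obtain ⟨i, rfl⟩ := List.mem_ofFn.1 hm
    constructor
    · intro p
      rw [hM i p, hM i (p.1, (ms p.1 i) p.2)]
      exact Prod.ext_iff.2 ⟨rfl, (hms1 p.1 i).1 p.2⟩
    · intro p
      rcases (hms1 p.1 i).2 p.2 with h | h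
      · left
        rw [hM i p, h]
      · right
        rw [hM i p, SimpleGraph.boxProd_adj]
        exact Or.inr ⟨by simpa using h, rfl⟩
  · rintro ⟨v, w⟩
    have hfold := fold_ofFn_fiber2 (fun i => (⇑(M i) : V × W → V × W)) (fun i => ⇑(ms v i)) v
      (fun i w => hM i (v, w)) w
    have hπv : π (v, w) = (v, σ v w) := by
      rw [hσ v w]
      exact (Prod.ext_iff.2 ⟨(hπ (v, w)).symm, rfl⟩ :
        (v, (π (v, w)).2) = π (v, w)).symm
    rw [← foldl_ofFn_coe M (v, w), hfold, hπv, hms2 v w, foldl_comp_apply]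
    rfl

end Lift2

theorem stmt_12 {V W : Type*} [Fintype V] [Fintype W]
    (G : SimpleGraph V) (H : SimpleGraph W) :
    routingNumber (G.boxProd H) ≤ 2 * routingNumber G + routingNumber H := by
  classical
  rcases isEmpty_or_nonempty (V × W) with hVW | hVW
  · -- trivial: no vertices
    have h0 : RoutableIn (G.boxProd H) 0 := by
      intro τ
      exact ⟨fun i => 1, fun i => isRoutingStep_one, fun v => isEmptyElim v⟩
    calc routingNumber (G.boxProd H) ≤ 0 := Nat.sInf_le h0
      _ ≤ _ := Nat.zero_le _
  · by_cases hS : {k | RoutableIn (G.boxProd H) k}.Nonempty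
    · obtain ⟨k₀, hk₀⟩ := hS
      have hpre : (G.boxProd H).Preconnected := preconnected_of_routableIn hk₀
      have hconn : (G.boxProd H).Connected := ⟨hpre⟩
      rw [SimpleGraph.connected_boxProd] at hconn
      have hV : Nonempty V := ⟨(Classical.arbitrary (V × W)).1⟩
      have hW : Nonempty W := ⟨(Classical.arbitrary (V × W)).2⟩
      obtain ⟨kG, hkG⟩ := exists_routableIn hconn.1.preconnected
      obtain ⟨kH, hkH⟩ := exists_routableIn hconn.2.preconnected
      have hGne : {k | RoutableIn G k}.Nonempty := ⟨kG, hkG⟩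
      have hHne : {k | RoutableIn H k}.Nonempty := ⟨kH, hkH⟩
      have haG : RoutableIn G (routingNumber G) := Nat.sInf_mem hGne
      have hbH : RoutableIn H (routingNumber H) := Nat.sInf_mem hHne
      set a := routingNumber G
      set b := routingNumber H
      have hmain : RoutableIn (G.boxProd H) (2 * a + b) := by
        apply routableIn_of_routesL
        intro τ
        obtain ⟨f, hf1, hf2⟩ := exists_f τ
        set π₁ : Equiv.Perm (V × W) :=
          Equiv.ofBijective (fun p => (f p, p.2)) (Finite.injective_iff_bijective.1 hf1) with hπ₁
        set ρ : Equiv.Perm (V × W) :=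
          Equiv.ofBijective (fun p => (f p, (τ p).2)) (Finite.injective_iff_bijective.1 hf2)
          with hρ
        have hπ₁app : ∀ p, π₁ p = (f p, p.2) := fun p => rfl
        have hρapp : ∀ p, ρ p = (f p, (τ p).2) := fun p => rfl
        set π₂ : Equiv.Perm (V × W) := π₁.symm.trans ρ with hπ₂
        set π₃ : Equiv.Perm (V × W) := ρ.symm.trans τ with hπ₃
        have hπ₁2 : ∀ p, (π₁ p).2 = p.2 := fun p => rfl
        have hπ₂1 : ∀ p, (π₂ p).1 = p.1 := by
          intro p
          show (ρ (π₁.symm p)).1 = p.1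
          rw [hρapp]
          have : f (π₁.symm p) = (π₁ (π₁.symm p)).1 := rfl
          rw [show f (π₁.symm p) = (π₁ (π₁.symm p)).1 from rfl, π₁.apply_symm_apply]
        have hπ₃2 : ∀ p, (π₃ p).2 = p.2 := by
          intro p
          show (τ (ρ.symm p)).2 = p.2
          rw [show (τ (ρ.symm p)).2 = (ρ (ρ.symm p)).2 from rfl, ρ.apply_symm_apply]
        obtain ⟨l₁, hl₁, hlen₁⟩ := routesL_boxProd_left (H := H) haG π₁ hπ₁2
        obtain ⟨l₂, hl₂, hlen₂⟩ := routesL_boxProd_right (G := G) hbH π₂ hπ₂1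
        obtain ⟨l₃, hl₃, hlen₃⟩ := routesL_boxProd_left (H := H) haG π₃ hπ₃2
        have hcomp : RoutesL (G.boxProd H) (l₁ ++ l₂ ++ l₃) (π₃ * (π₂ * π₁)) := by
          exact routesL_append (routesL_append hl₁ hl₂) hl₃
        have hτ : π₃ * (π₂ * π₁) = τ := by
          apply Equiv.ext
          intro p
          show π₃ (π₂ (π₁ p)) = τ p
          rw [hπ₂, hπ₃]
          simp
        rw [hτ] at hcomp
        refine ⟨l₁ ++ l₂ ++ l₃, hcomp, ?_⟩
        simp [hlen₁, hlen₂, hlen₃]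
        ring
      exact Nat.sInf_le hmain
    · rw [Set.not_nonempty_iff_eq_empty] at hS
      unfold routingNumber
      rw [hS, Nat.sInf_empty]
      exact Nat.zero_le _
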